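/- arXiv:1706.10110 — 4 statements merged into one kernel-verified Lean document; each statement's English description precedes it below -/
import Mathlib

section
/- Let m, s, k be positive integers with s = 4k and k even, and let 𝕊 be the set of tuples S ∈ ([m] × [s] × [s])^{k/2} such that (1) every triple (i, j, h) ∈ S has j ≠ h, (2) every column a ∈ [s] satisfies |{(i,j,h) ∈ S : j = a or h = a}| ≤ 1, and (3) every diagonal a ∈ {−(m−1), …, s−1} satisfies |{(i,j,h) ∈ S : j−i = a or h−i = a}| ≤ 1. Then |𝕊| ≥ m^{k/2} · s^k · 4^{−k/2}. -/
open Finset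

/-- The predicate on tuples of triples: distinct entries in each triple, each column touched
at most once, each diagonal touched at most once. -/
def HTOk (m s n : ℕ) (S : Fin n → Fin m × Fin s × Fin s) : Prop :=
  (∀ l, (S l).2.1 ≠ (S l).2.2) ∧
  (∀ a : Fin s,
    (Finset.univ.filter fun l => (S l).2.1 = a ∨ (S l).2.2 = a).card ≤ 1) ∧
  (∀ a : ℤ,
    (Finset.univ.filter fun l =>
      ((S l).2.1 : ℤ) - ((S l).1 : ℤ) = a ∨ ((S l).2.2 : ℤ) - ((S l).1 : ℤ) = a).card ≤ 1)

lemma HT_filter_cast {n : ℕ} (P : Fin (n + 1) → Prop) [DecidablePred P] :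
    (Finset.univ.filter fun l : Fin n => P l.castSucc).card ≤ (Finset.univ.filter P).card := by
  apply Finset.card_le_card_of_injOn Fin.castSucc
  · intro a ha
    simp only [coe_filter, mem_filter, mem_univ, true_and, Set.mem_setOf_eq, mem_coe] at ha ⊢
    exact ha
  · exact fun a _ b _ h => Fin.castSucc_injective _ h

lemma HTOk_init {m s n : ℕ} {S : Fin (n + 1) → Fin m × Fin s × Fin s}
    (hS : HTOk m s (n + 1) S) : HTOk m s n (Fin.init S) := by
  obtain ⟨h1, h2, h3⟩ := hS
  refine ⟨fun l => h1 l.castSucc, fun a => ?_, fun a => ?_⟩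
  · exact le_trans (HT_filter_cast fun l => (S l).2.1 = a ∨ (S l).2.2 = a) (h2 a)
  · exact le_trans (HT_filter_cast fun l =>
      ((S l).2.1 : ℤ) - ((S l).1 : ℤ) = a ∨ ((S l).2.2 : ℤ) - ((S l).1 : ℤ) = a) (h3 a)

lemma HT_card_le_one_snoc {n : ℕ} (P : Fin (n + 1) → Prop) [DecidablePred P]
    (h1 : (Finset.univ.filter fun l : Fin n => P l.castSucc).card ≤ 1)
    (h2 : ∀ l : Fin n, P l.castSucc → P (Fin.last n) → False) :
    (Finset.univ.filter P).card ≤ 1 := by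
  rw [Finset.card_le_one]
  intro a ha b hb
  simp only [mem_filter, mem_univ, true_and] at ha hb
  induction a using Fin.lastCases with
  | last =>
    induction b using Fin.lastCases with
    | last => rfl
    | cast b => exact absurd (h2 b hb ha) (by simp)
  | cast a =>
    induction b using Fin.lastCases with
    | last => exact absurd (h2 a ha hb) (by simp)
    | cast b =>
      have := Finset.card_le_one.mp h1 a (by simp [ha]) b (by simp [hb])
      exact congrArg Fin.castSucc this

/-- The key extension-counting lemma. -/
lemma HT_ext_count (m s n : ℕ) (T : Fin n → Fin m × Fin s × Fin s) (hT : HTOk m s n T) :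
    m * ((s - 4 * n) * (s - 4 * n - 1)) ≤
      Nat.card {x : Fin m × Fin s × Fin s // HTOk m s (n + 1) (Fin.snoc T x)} := by
  classical
  -- used columns and diagonals
  set C : Finset (Fin s) :=
    (Finset.univ.image fun l => (T l).2.1) ∪ (Finset.univ.image fun l => (T l).2.2) with hCdef
  set D : Finset ℤ :=
    (Finset.univ.image fun l => ((T l).2.1 : ℤ) - ((T l).1 : ℤ)) ∪
      (Finset.univ.image fun l => ((T l).2.2 : ℤ) - ((T l).1 : ℤ)) with hDdef
  have hC : C.card ≤ 2 * n := by
    refine le_trans (Finset.card_union_le _ _) ?_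
    have a1 := Finset.card_image_le (s := (Finset.univ : Finset (Fin n))) (f := fun l => (T l).2.1)
    have a2 := Finset.card_image_le (s := (Finset.univ : Finset (Fin n))) (f := fun l => (T l).2.2)
    simp only [Finset.card_univ, Fintype.card_fin] at a1 a2
    omega
  have hD : D.card ≤ 2 * n := by
    refine le_trans (Finset.card_union_le _ _) ?_
    have a1 := Finset.card_image_le (s := (Finset.univ : Finset (Fin n)))
      (f := fun l => ((T l).2.1 : ℤ) - ((T l).1 : ℤ))
    have a2 := Finset.card_image_le (s := (Finset.univ : Finset (Fin n)))
      (f := fun l => ((T l).2.2 : ℤ) - ((T l).1 : ℤ))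
    simp only [Finset.card_univ, Fintype.card_fin] at a1 a2
    omega
  -- good columns for a given row i
  set G : Fin m → Finset (Fin s) := fun i =>
    Finset.univ.filter fun c => c ∉ C ∧ ((c : ℤ) - (i : ℤ)) ∉ D with hGdef
  have hG : ∀ i, s - 4 * n ≤ (G i).card := by
    intro i
    have hbadD : (Finset.univ.filter fun c : Fin s => ((c : ℤ) - (i : ℤ)) ∈ D).card ≤ 2 * n := by
      refine le_trans (Finset.card_le_card_of_injOn (fun c => ((c : ℤ) - (i : ℤ)))
        (fun c hc => by simpa using (Finset.mem_filter.mp hc).2) ?_) hD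
      intro a _ b _ h
      have h2 : (a : ℤ) - (i : ℤ) = (b : ℤ) - (i : ℤ) := h
      have : (a : ℤ) = (b : ℤ) := by omega
      exact Fin.ext (by exact_mod_cast this)
    have hcompl : G i = (C ∪ (Finset.univ.filter fun c : Fin s => ((c : ℤ) - (i : ℤ)) ∈ D))ᶜ := by
      ext c
      simp [hGdef]
    have hcard : (G i).card = s - (C ∪ (Finset.univ.filter fun c : Fin s =>
        ((c : ℤ) - (i : ℤ)) ∈ D)).card := by
      rw [hcompl, Finset.card_compl, Fintype.card_fin]
    have hun : (C ∪ (Finset.univ.filter fun c : Fin s => ((c : ℤ) - (i : ℤ)) ∈ D)).card ≤ 4 * n :=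
      le_trans (Finset.card_union_le _ _) (by omega)
    omega
  -- membership implies validity of the extension
  have hmem : ∀ (i : Fin m) (j h : Fin s), j ∈ G i → h ∈ G i → j ≠ h →
      HTOk m s (n + 1) (Fin.snoc T (i, j, h)) := by
    intro i j h hj hh hjh
    simp only [hGdef, Finset.mem_filter, Finset.mem_univ, true_and] at hj hh
    refine ⟨?_, fun a => ?_, fun a => ?_⟩
    · intro l
      induction l using Fin.lastCases with
      | last => simpa using hjh
      | cast l => simpa using hT.1 l
    · refine HT_card_le_one_snoc _ ?_ ?_
      · simp only [Fin.snoc_castSucc]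
        exact hT.2.1 a
      · intro l hl hlast
        simp only [Fin.snoc_castSucc] at hl
        simp only [Fin.snoc_last] at hlast
        have haC : (a : Fin s) ∈ C := by
          rcases hl with hl | hl
          · exact Finset.mem_union_left _ (Finset.mem_image.mpr ⟨l, Finset.mem_univ _, hl⟩)
          · exact Finset.mem_union_right _ (Finset.mem_image.mpr ⟨l, Finset.mem_univ _, hl⟩)
        rcases hlast with hlast | hlast
        · exact hj.1 (hlast ▸ haC)
        · exact hh.1 (hlast ▸ haC)
    · refine HT_card_le_one_snoc _ ?_ ?_
      · simp only [Fin.snoc_castSucc]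
        exact hT.2.2 a
      · intro l hl hlast
        simp only [Fin.snoc_castSucc] at hl
        simp only [Fin.snoc_last] at hlast
        have haD : a ∈ D := by
          rcases hl with hl | hl
          · exact Finset.mem_union_left _ (Finset.mem_image.mpr ⟨l, Finset.mem_univ _, hl⟩)
          · exact Finset.mem_union_right _ (Finset.mem_image.mpr ⟨l, Finset.mem_univ _, hl⟩)
        rcases hlast with hlast | hlast
        · exact hj.2 (hlast ▸ haD)
        · exact hh.2 (hlast ▸ haD)
  -- the injection
  let W := (i : Fin m) × {p : Fin s × Fin s // p ∈ (G i).offDiag}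
  let f : W → {x : Fin m × Fin s × Fin s // HTOk m s (n + 1) (Fin.snoc T x)} :=
    fun w => ⟨(w.1, w.2.1.1, w.2.1.2), by
      obtain ⟨hj, hh, hjh⟩ := Finset.mem_offDiag.mp w.2.2
      exact hmem w.1 w.2.1.1 w.2.1.2 hj hh hjh⟩
  have hf : Function.Injective f := by
    rintro ⟨i, ⟨⟨j, h⟩, hp⟩⟩ ⟨i', ⟨⟨j', h'⟩, hp'⟩⟩ he
    simp only [f, Subtype.mk.injEq, Prod.mk.injEq] at he
    obtain ⟨h1, h2, h3⟩ := he
    subst h1; subst h2; subst h3; rfl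
  have hcardW : m * ((s - 4 * n) * (s - 4 * n - 1)) ≤ Nat.card W := by
    have : ∀ i : Fin m, Nat.card {p : Fin s × Fin s // p ∈ (G i).offDiag} =
        (G i).card * (G i).card - (G i).card := by
      intro i
      rw [Nat.card_eq_finsetCard, Finset.offDiag_card]
    have hsum : Nat.card W = ∑ i : Fin m, ((G i).card * (G i).card - (G i).card) := by
      have : ∀ i : Fin m, Fintype {p : Fin s × Fin s // p ∈ (G i).offDiag} :=
        fun i => Fintype.ofFinite _
      simp only [W, Nat.card_eq_fintype_card]
      rw [Fintype.card_sigma]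
      congr 1
      ext i
      rw [← Nat.card_eq_fintype_card, Nat.card_eq_finsetCard, Finset.offDiag_card]
    rw [hsum]
    have hterm : ∀ i : Fin m,
        (s - 4 * n) * (s - 4 * n - 1) ≤ (G i).card * (G i).card - (G i).card := by
      intro i
      have h1 := hG i
      have : (G i).card * ((G i).card - 1) = (G i).card * (G i).card - (G i).card := by
        rw [Nat.mul_sub, mul_one]
      rw [← this]
      exact Nat.mul_le_mul h1 (by omega)
    calc m * ((s - 4 * n) * (s - 4 * n - 1))
        = ∑ _i : Fin m, (s - 4 * n) * (s - 4 * n - 1) := by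
          simp [Finset.sum_const, Finset.card_univ, mul_comm]
      _ ≤ _ := Finset.sum_le_sum fun i _ => hterm i
  exact le_trans hcardW (Nat.card_le_card_of_injective f hf)

/-- The equivalence splitting off the last triple. -/
lemma HT_card_succ (m s n : ℕ) :
    Nat.card {S : Fin (n + 1) → Fin m × Fin s × Fin s // HTOk m s (n + 1) S} =
      Nat.card ((T : {S : Fin n → Fin m × Fin s × Fin s // HTOk m s n S}) ×
        {x : Fin m × Fin s × Fin s // HTOk m s (n + 1) (Fin.snoc T.1 x)}) := by
  refine (Nat.card_congr (Equiv.ofBijective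
    (fun p : (T : {S : Fin n → Fin m × Fin s × Fin s // HTOk m s n S}) ×
        {x : Fin m × Fin s × Fin s // HTOk m s (n + 1) (Fin.snoc T.1 x)} =>
      (⟨Fin.snoc p.1.1 p.2.1, p.2.2⟩ :
        {S : Fin (n + 1) → Fin m × Fin s × Fin s // HTOk m s (n + 1) S})) ⟨?_, ?_⟩)).symm
  · rintro ⟨⟨T, hT⟩, ⟨x, hx⟩⟩ ⟨⟨T', hT'⟩, ⟨x', hx'⟩⟩ he
    simp only [Subtype.mk.injEq] at he
    have hTT : T = T' := by
      have := congrArg Fin.init he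
      rwa [Fin.init_snoc, Fin.init_snoc] at this
    subst hTT
    have hxx : x = x' := by
      have := congrArg (fun g => g (Fin.last n)) he
      simpa using this
    subst hxx
    rfl
  · rintro ⟨S, hS⟩
    refine ⟨⟨⟨Fin.init S, HTOk_init hS⟩, ⟨S (Fin.last n), ?_⟩⟩, ?_⟩
    · rw [Fin.snoc_init_self]; exact hS
    · exact Subtype.ext (Fin.snoc_init_self S)

lemma HT_main_count (m s : ℕ) : ∀ n : ℕ,
    m ^ n * ∏ l ∈ Finset.range n, ((s - 4 * l) * (s - 4 * l - 1)) ≤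
      Nat.card {S : Fin n → Fin m × Fin s × Fin s // HTOk m s n S} := by
  intro n
  induction n with
  | zero =>
    simp only [pow_zero, Finset.range_zero, Finset.prod_empty, mul_one]
    rw [Nat.one_le_iff_ne_zero, Nat.card_ne_zero]
    refine ⟨⟨⟨fun l => l.elim0, ?_, ?_, ?_⟩⟩, inferInstance⟩
    · intro l; exact l.elim0
    · intro a; simp
    · intro a; simp
  | succ n ih =>
    rw [HT_card_succ]
    have : ∀ T : {S : Fin n → Fin m × Fin s × Fin s // HTOk m s n S},
        Fintype {x : Fin m × Fin s × Fin s // HTOk m s (n + 1) (Fin.snoc T.1 x)} :=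
      fun T => Fintype.ofFinite _
    have hfin : Fintype {S : Fin n → Fin m × Fin s × Fin s // HTOk m s n S} :=
      Fintype.ofFinite _
    rw [Nat.card_eq_fintype_card, Fintype.card_sigma]
    have hbound : ∀ T : {S : Fin n → Fin m × Fin s × Fin s // HTOk m s n S},
        m * ((s - 4 * n) * (s - 4 * n - 1)) ≤
          Fintype.card {x : Fin m × Fin s × Fin s // HTOk m s (n + 1) (Fin.snoc T.1 x)} := by
      intro T
      rw [← Nat.card_eq_fintype_card]
      exact HT_ext_count m s n T.1 T.2
    calc m ^ (n + 1) * ∏ l ∈ Finset.range (n + 1), ((s - 4 * l) * (s - 4 * l - 1))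
        = (m ^ n * ∏ l ∈ Finset.range n, ((s - 4 * l) * (s - 4 * l - 1))) *
            (m * ((s - 4 * n) * (s - 4 * n - 1))) := by
          rw [Finset.prod_range_succ, pow_succ]; ring
      _ ≤ Fintype.card {S : Fin n → Fin m × Fin s × Fin s // HTOk m s n S} *
            (m * ((s - 4 * n) * (s - 4 * n - 1))) := by
          refine Nat.mul_le_mul_right _ ?_
          rw [← Nat.card_eq_fintype_card]
          exact ih
      _ ≤ ∑ T : {S : Fin n → Fin m × Fin s × Fin s // HTOk m s n S},
            Fintype.card {x : Fin m × Fin s × Fin s // HTOk m s (n + 1) (Fin.snoc T.1 x)} := by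
          rw [← Finset.card_univ, ← smul_eq_mul]
          exact Finset.card_nsmul_le_sum _ _ _ fun T _ => hbound T

/-- Lower bound on the number of "half tuples": with `s = 4k`, `k` even, the number of tuples
of `k/2` triples in `[m] × [s] × [s]` with distinct entries in each triple, touching each
column at most once and each diagonal at most once, is at least `m^{k/2} s^k 4^{-k/2}`. -/
theorem half_tuple_count_lower (m s k : ℕ) (hm : 0 < m) (hk : 0 < k) (hkeven : Even k)
    (hs : s = 4 * k) :
    (m : ℝ) ^ (k / 2) * (s : ℝ) ^ k / (4 : ℝ) ^ (k / 2) ≤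
      Nat.card {S : Fin (k / 2) → Fin m × Fin s × Fin s //
        (∀ l, (S l).2.1 ≠ (S l).2.2) ∧
        (∀ a : Fin s,
          (Finset.univ.filter fun l => (S l).2.1 = a ∨ (S l).2.2 = a).card ≤ 1) ∧
        (∀ a : ℤ,
          (Finset.univ.filter fun l =>
            ((S l).2.1 : ℤ) - ((S l).1 : ℤ) = a ∨ ((S l).2.2 : ℤ) - ((S l).1 : ℤ) = a).card ≤ 1)} := by
  set t := k / 2 with ht
  have hk2 : k = 2 * t := by
    obtain ⟨u, hu⟩ := hkeven
    omega
  have hmain := HT_main_count m s t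
  -- lower bound the product by (4 k^2)^t
  have hprod : (m * (4 * k ^ 2)) ^ t ≤
      m ^ t * ∏ l ∈ Finset.range t, ((s - 4 * l) * (s - 4 * l - 1)) := by
    rw [mul_pow]
    refine Nat.mul_le_mul_left _ ?_
    calc (4 * k ^ 2) ^ t = ∏ _l ∈ Finset.range t, 4 * k ^ 2 := by
          rw [Finset.prod_const, Finset.card_range]
      _ ≤ _ := by
          refine Finset.prod_le_prod' fun l hl => ?_
          have hl' : l < t := Finset.mem_range.mp hl
          have h1 : 2 * k + 4 ≤ s - 4 * l := by omega
          have h2 : 2 * k + 3 ≤ s - 4 * l - 1 := by omega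
          calc 4 * k ^ 2 = (2 * k) * (2 * k) := by ring
            _ ≤ (2 * k + 4) * (2 * k + 3) := Nat.mul_le_mul (by omega) (by omega)
            _ ≤ (s - 4 * l) * (s - 4 * l - 1) := Nat.mul_le_mul h1 h2
  have hchain : (m * (4 * k ^ 2)) ^ t ≤
      Nat.card {S : Fin t → Fin m × Fin s × Fin s // HTOk m s t S} :=
    le_trans hprod hmain
  -- the real-number identity
  have h4 : (4 : ℝ) ^ t ≠ 0 := by positivity
  have hreal : (m : ℝ) ^ t * (s : ℝ) ^ k / (4 : ℝ) ^ t = ((m * (4 * k ^ 2)) ^ t : ℕ) := by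
    subst hs
    rw [hk2]
    push_cast
    rw [pow_mul, show ((4 : ℝ) * (2 * (t : ℝ))) ^ 2 = 4 * (4 * (2 * (t : ℝ)) ^ 2) from by ring,
      mul_pow (4 : ℝ) (4 * (2 * (t : ℝ)) ^ 2), mul_pow (m : ℝ)]
    field_simp
  rw [hreal]
  exact Nat.cast_le.mpr hchain
end

section
/- With notation as above (T Toeplitz with Rademacher entries, D Rademacher diagonal, x supported on the first s coordinates with entries ±1/√s, Z_k := (‖(1/√m) T D x‖₂² − 1)^k), for any even positive integer k, E[Z_k] = Γ_k / (s^k m^k), where Γ_k is the number of tuples S ∈ ([m] × [s] × [s])^k with j ≠ h in each triple, each column touched an even number of times, and each diagonal touched an even number of times. -/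
open MeasureTheory Finset

namespace MomentGamma

variable {Ω : Type*} [MeasurableSpace Ω] {μ : Measure Ω} [IsProbabilityMeasure μ]

lemma rad_ae {X : Ω → ℝ} (hm : Measurable X)
    (h1 : μ {ω | X ω = 1} = 1/2) (h2 : μ {ω | X ω = -1} = 1/2) :
    ∀ᵐ ω ∂μ, X ω = 1 ∨ X ω = -1 := by
  have hA : MeasurableSet {ω | X ω = 1} := hm (measurableSet_singleton 1)
  have hB : MeasurableSet {ω | X ω = -1} := hm (measurableSet_singleton (-1))
  have hdisj : Disjoint {ω | X ω = 1} {ω | X ω = -1} := by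
    rw [Set.disjoint_left]
    intro ω hω1 hω2
    simp only [Set.mem_setOf_eq] at hω1 hω2
    rw [hω1] at hω2; norm_num at hω2
  have hu : μ ({ω | X ω = 1} ∪ {ω | X ω = -1}) = 1 := by
    rw [measure_union hdisj hB, h1, h2]
    norm_num
    exact ENNReal.inv_two_add_inv_two
  have : μ ({ω | X ω = 1} ∪ {ω | X ω = -1})ᶜ = 0 := by
    rw [measure_compl (hA.union hB) (measure_ne_top _ _), hu, measure_univ, tsub_self]
  refine measure_mono_null ?_ this
  intro ω hω
  simp only [Set.mem_compl_iff, Set.mem_union, Set.mem_setOf_eq]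
  tauto

lemma rad_pow_integral {X : Ω → ℝ} (hm : Measurable X)
    (h1 : μ {ω | X ω = 1} = 1/2) (h2 : μ {ω | X ω = -1} = 1/2) (c : ℕ) :
    ∫ ω, X ω ^ c ∂μ = if Even c then 1 else 0 := by
  set A := {ω | X ω = 1} with hA'
  set B := {ω | X ω = -1} with hB'
  have hA : MeasurableSet A := hm (measurableSet_singleton 1)
  have hB : MeasurableSet B := hm (measurableSet_singleton (-1))
  have hcong : (fun ω => X ω ^ c) =ᵐ[μ]
      (fun ω => A.indicator (fun _ => (1:ℝ)) ω + B.indicator (fun _ => ((-1:ℝ))^c) ω) := by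
    filter_upwards [rad_ae hm h1 h2] with ω hω
    rcases hω with h | h
    · have hωA : ω ∈ A := h
      have hωB : ω ∉ B := by
        simp only [hB', Set.mem_setOf_eq, h]; norm_num
      simp [Set.indicator_of_mem hωA, Set.indicator_of_notMem hωB, h]
    · have hωB : ω ∈ B := h
      have hωA : ω ∉ A := by
        simp only [hA', Set.mem_setOf_eq, h]; norm_num
      simp [Set.indicator_of_mem hωB, Set.indicator_of_notMem hωA, h]
  rw [integral_congr_ae hcong, integral_add
      ((integrable_const _).indicator hA) ((integrable_const _).indicator hB),
    integral_indicator_const _ hA, integral_indicator_const _ hB, measureReal_def, measureReal_def, h1, h2]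
  have : ((1:ENNReal)/2).toReal = (1:ℝ)/2 := by simp
  rw [this]
  rcases Nat.even_or_odd c with h | h
  · rw [if_pos h, h.neg_one_pow]; norm_num
  · rw [if_neg (Nat.not_even_iff_odd.mpr h), h.neg_one_pow]; norm_num

lemma integrable_of_ae_bdd {f : Ω → ℝ} (hm : AEStronglyMeasurable f μ) {C : ℝ}
    (h : ∀ᵐ ω ∂μ, |f ω| ≤ C) : Integrable f μ :=
  (integrable_const C).mono' hm (by filter_upwards [h] with ω hω; simpa using hω)

lemma ae_abs_prod_le_one {ι : Type*} {f : ι → Ω → ℝ} (F : Finset ι)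
    (h : ∀ i ∈ F, ∀ᵐ ω ∂μ, |f i ω| ≤ 1) :
    ∀ᵐ ω ∂μ, |∏ i ∈ F, f i ω| ≤ 1 := by
  have := (ae_ball_iff F.countable_toSet).mpr h
  filter_upwards [this] with ω hω
  rw [Finset.abs_prod]
  exact Finset.prod_le_one (fun i _ => abs_nonneg _) (fun i hi => hω i hi)

lemma integral_indep_prod {ι : Type*} [DecidableEq ι] {X : ι → Ω → ℝ}
    (hmeas : ∀ i, Measurable (X i))
    (hindep : ProbabilityTheory.iIndepFun X μ)
    (hbdd : ∀ i, ∀ᵐ ω ∂μ, |X i ω| ≤ 1)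
    (F : Finset ι) :
    ∫ ω, ∏ i ∈ F, X i ω ∂μ = ∏ i ∈ F, ∫ ω, X i ω ∂μ := by
  classical
  induction F using Finset.induction with
  | empty => simp
  | @insert a F hni ih =>
    have hip : ProbabilityTheory.IndepFun (∏ i ∈ F, X i) (X a) μ :=
      hindep.indepFun_finset_prod_of_notMem hmeas hni
    have hint_prod : Integrable (∏ i ∈ F, X i) μ := by
      rw [Finset.prod_fn F X]
      refine integrable_of_ae_bdd ((Finset.measurable_prod F (fun i _ => hmeas i)).aestronglyMeasurable) (C := 1) ?_
      have := ae_abs_prod_le_one (μ := μ) F (fun i _ => hbdd i)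
      filter_upwards [this] with ω hω
      simpa using hω
    have hint_a : Integrable (X a) μ :=
      integrable_of_ae_bdd (hmeas a).aestronglyMeasurable (hbdd a)
    rw [Finset.prod_insert hni, ← ih]
    have h1 : ∫ ω, ∏ i ∈ insert a F, X i ω ∂μ = ∫ ω, (∏ i ∈ F, X i) ω * X a ω ∂μ := by
      congr 1; funext ω; rw [Finset.prod_insert hni, Finset.prod_apply]; ring
    have h2 : ∫ ω, (∏ i ∈ F, X i) ω * X a ω ∂μ
        = (∫ ω, (∏ i ∈ F, X i) ω ∂μ) * ∫ ω, X a ω ∂μ :=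
      hip.integral_fun_mul_eq_mul_integral hint_prod.aestronglyMeasurable hint_a.aestronglyMeasurable
    rw [h1, h2, mul_comm]
    congr 1
    simp only [Finset.prod_apply]

lemma slot_card_eq {α : Type*} [DecidableEq α] {k : ℕ} (f g : Fin k → α)
    (hne : ∀ l, f l ≠ g l) (a : α) :
    (Finset.univ.filter fun q : Fin k × Fin 2 =>
        (if q.2 = (0 : Fin 2) then f q.1 else g q.1) = a).card
      = (Finset.univ.filter fun l : Fin k => f l = a ∨ g l = a).card := by
  rw [Finset.card_filter, Finset.card_filter, Fintype.sum_prod_type]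
  refine Finset.sum_congr rfl fun l _ => ?_
  rw [Fin.sum_univ_two]
  by_cases h1 : f l = a <;> by_cases h2 : g l = a
  · exact absurd (h1.trans h2.symm) (hne l)
  all_goals simp [h1, h2]

/-- column of a slot -/
def colF {k : ℕ} (S : Fin k → ℕ × ℕ × ℕ) (q : Fin k × Fin 2) : ℕ :=
  if q.2 = (0 : Fin 2) then (S q.1).2.1 else (S q.1).2.2

/-- diagonal of a slot -/
def dgF {k : ℕ} (S : Fin k → ℕ × ℕ × ℕ) (q : Fin k × Fin 2) : ℤ :=
  if q.2 = (0 : Fin 2) then ((S q.1).2.1 : ℤ) - ((S q.1).1 : ℤ)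
  else ((S q.1).2.2 : ℤ) - ((S q.1).1 : ℤ)

open scoped Classical in
lemma per_tuple (μ : Measure Ω) [IsProbabilityMeasure μ]
    (s : ℕ) (hs : 0 < s)
    (t : ℤ → Ω → ℝ) (d : ℕ → Ω → ℝ)
    (ht : ∀ a, Measurable (t a)) (hd : ∀ j, Measurable (d j))
    (hrad_t : ∀ a : ℤ, μ {ω | t a ω = 1} = 1/2 ∧ μ {ω | t a ω = -1} = 1/2)
    (hrad_d : ∀ j : ℕ, μ {ω | d j ω = 1} = 1/2 ∧ μ {ω | d j ω = -1} = 1/2)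
    (hindep : ProbabilityTheory.iIndepFun (Sum.elim t d) μ)
    (x : ℕ → ℝ) (hx : ∀ j < s, x j = 1 / Real.sqrt s ∨ x j = -(1 / Real.sqrt s))
    (k : ℕ)
    (S : Fin k → ℕ × ℕ × ℕ)
    (hS : ∀ l, (S l).2.1 < s ∧ (S l).2.2 < s ∧ (S l).2.1 ≠ (S l).2.2) :
    ∫ ω, ∏ l : Fin k, (t (((S l).2.1 : ℤ) - ((S l).1 : ℤ)) ω *
        t (((S l).2.2 : ℤ) - ((S l).1 : ℤ)) ω *
        d (S l).2.1 ω * d (S l).2.2 ω * (x (S l).2.1 * x (S l).2.2)) ∂μ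
    = if ((∀ a : ℕ, Even ((Finset.univ.filter fun l : Fin k =>
            (S l).2.1 = a ∨ (S l).2.2 = a).card)) ∧
        (∀ a : ℤ, Even ((Finset.univ.filter fun l : Fin k =>
            ((S l).2.1 : ℤ) - ((S l).1 : ℤ) = a ∨
              ((S l).2.2 : ℤ) - ((S l).1 : ℤ) = a).card)))
      then (1 / (s:ℝ)) ^ k else 0 := by
  classical
  have hsR : (0:ℝ) < (s:ℝ) := by exact_mod_cast hs
  have hxsq : ∀ j, j < s → x j ^ 2 = 1 / (s:ℝ) := by
    intro j hj
    rcases hx j hj with h | h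
    · rw [h, div_pow, one_pow, Real.sq_sqrt hsR.le]
    · rw [h, show (-(1 / Real.sqrt (s:ℝ))) ^ 2 = (1 / Real.sqrt (s:ℝ)) ^ 2 from by ring,
        div_pow, one_pow, Real.sq_sqrt hsR.le]
  have hcols : ∀ q, colF S q < s := by
    intro q
    rcases hS q.1 with ⟨h1, h2, -⟩
    by_cases h : q.2 = (0 : Fin 2)
    · simpa [colF, h] using h1
    · simpa [colF, h] using h2
  -- slot-count to pair-count
  have hcd' : ∀ a : ℕ, (Finset.univ.filter fun q : Fin k × Fin 2 => colF S q = a).card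
      = (Finset.univ.filter fun l : Fin k => (S l).2.1 = a ∨ (S l).2.2 = a).card := by
    intro a
    exact slot_card_eq (fun l => (S l).2.1) (fun l => (S l).2.2) (fun l => (hS l).2.2) a
  have hct' : ∀ a : ℤ, (Finset.univ.filter fun q : Fin k × Fin 2 => dgF S q = a).card
      = (Finset.univ.filter fun l : Fin k =>
          ((S l).2.1 : ℤ) - ((S l).1 : ℤ) = a ∨ ((S l).2.2 : ℤ) - ((S l).1 : ℤ) = a).card := by
    intro a
    refine slot_card_eq (fun l => ((S l).2.1 : ℤ) - ((S l).1 : ℤ))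
      (fun l => ((S l).2.2 : ℤ) - ((S l).1 : ℤ)) (fun l heq => (hS l).2.2 ?_) a
    have h3 : ((S l).2.1 : ℤ) - ((S l).1 : ℤ) = ((S l).2.2 : ℤ) - ((S l).1 : ℤ) := heq
    omega
  set U : Finset (ℤ ⊕ ℕ) :=
    (Finset.univ.image (dgF S)).map ⟨Sum.inl, Sum.inl_injective⟩ ∪
    (Finset.univ.image (colF S)).map ⟨Sum.inr, Sum.inr_injective⟩ with hU
  set Y : ℤ ⊕ ℕ → Ω → ℝ := fun v ω => Sum.elim t d v ω ^
      Sum.elim (fun a => (Finset.univ.filter fun q : Fin k × Fin 2 => dgF S q = a).card)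
        (fun j => (Finset.univ.filter fun q : Fin k × Fin 2 => colF S q = j).card) v with hYdef
  have hdisj : Disjoint ((Finset.univ.image (dgF S)).map ⟨Sum.inl, Sum.inl_injective⟩)
      ((Finset.univ.image (colF S)).map ⟨Sum.inr, Sum.inr_injective⟩) := by
    rw [Finset.disjoint_left]
    rintro v hv1 hv2
    simp only [Finset.mem_map, Function.Embedding.coeFn_mk] at hv1 hv2
    obtain ⟨a, -, rfl⟩ := hv1
    obtain ⟨b, -, hb⟩ := hv2
    exact absurd hb (by simp)
  have h2 : ∀ ω, ∏ v ∈ U, Y v ω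
      = (∏ q : Fin k × Fin 2, t (dgF S q) ω) * (∏ q : Fin k × Fin 2, d (colF S q) ω) := by
    intro ω
    rw [hU, Finset.prod_union hdisj, Finset.prod_map, Finset.prod_map]
    congr 1
    · rw [Finset.prod_comp (fun a : ℤ => t a ω) (dgF S)]
      exact Finset.prod_congr rfl fun a _ => rfl
    · rw [Finset.prod_comp (fun j : ℕ => d j ω) (colF S)]
      exact Finset.prod_congr rfl fun a _ => rfl
  have expand : (fun ω => ∏ l : Fin k, (t (((S l).2.1 : ℤ) - ((S l).1 : ℤ)) ω *
        t (((S l).2.2 : ℤ) - ((S l).1 : ℤ)) ω *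
        d (S l).2.1 ω * d (S l).2.2 ω * (x (S l).2.1 * x (S l).2.2)))
      = fun ω => (∏ q : Fin k × Fin 2, x (colF S q)) * ∏ v ∈ U, Y v ω := by
    funext ω
    have h1 : ∏ q : Fin k × Fin 2, (t (dgF S q) ω * d (colF S q) ω * x (colF S q))
        = ∏ l : Fin k, (t (((S l).2.1 : ℤ) - ((S l).1 : ℤ)) ω *
            t (((S l).2.2 : ℤ) - ((S l).1 : ℤ)) ω *
            d (S l).2.1 ω * d (S l).2.2 ω * (x (S l).2.1 * x (S l).2.2)) := by
      rw [Fintype.prod_prod_type]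
      refine Finset.prod_congr rfl fun l _ => ?_
      rw [Fin.prod_univ_two]
      simp only [colF, dgF]
      norm_num
      ring
    rw [← h1, h2 ω]
    rw [← Finset.prod_mul_distrib, ← Finset.prod_mul_distrib]
    refine Finset.prod_congr rfl fun q _ => ?_
    ring
  rw [expand, MeasureTheory.integral_const_mul]
  have hYmeas : ∀ v, Measurable (Y v) := by
    intro v
    cases v with
    | inl a => exact (ht a).pow_const _
    | inr j => exact (hd j).pow_const _
  have hYindep : ProbabilityTheory.iIndepFun Y μ := by
    exact hindep.comp (fun v (r : ℝ) => r ^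
      Sum.elim (fun a => (Finset.univ.filter fun q : Fin k × Fin 2 => dgF S q = a).card)
        (fun j => (Finset.univ.filter fun q : Fin k × Fin 2 => colF S q = j).card) v)
      (fun v => measurable_id.pow_const _)
  have hYbdd : ∀ v, ∀ᵐ ω ∂μ, |Y v ω| ≤ 1 := by
    intro v
    cases v with
    | inl a =>
      filter_upwards [rad_ae (ht a) (hrad_t a).1 (hrad_t a).2] with ω hω
      rcases hω with h | h <;>
        simp [hYdef, h, abs_pow]
    | inr j =>
      filter_upwards [rad_ae (hd j) (hrad_d j).1 (hrad_d j).2] with ω hω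
      rcases hω with h | h <;>
        simp [hYdef, h, abs_pow]
  rw [integral_indep_prod hYmeas hYindep hYbdd U]
  have hfac : ∀ v, ∫ ω, Y v ω ∂μ = if Even
      (Sum.elim (fun a => (Finset.univ.filter fun q : Fin k × Fin 2 => dgF S q = a).card)
        (fun j => (Finset.univ.filter fun q : Fin k × Fin 2 => colF S q = j).card) v)
      then (1:ℝ) else 0 := by
    intro v
    cases v with
    | inl a => exact rad_pow_integral (ht a) (hrad_t a).1 (hrad_t a).2 _
    | inr j => exact rad_pow_integral (hd j) (hrad_d j).1 (hrad_d j).2 _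
  rw [Finset.prod_congr rfl (fun v _ => hfac v), Finset.prod_boole]
  have hiff : (∀ v ∈ U, Even
      (Sum.elim (fun a => (Finset.univ.filter fun q : Fin k × Fin 2 => dgF S q = a).card)
        (fun j => (Finset.univ.filter fun q : Fin k × Fin 2 => colF S q = j).card) v)) ↔
      ((∀ a : ℕ, Even ((Finset.univ.filter fun l : Fin k =>
            (S l).2.1 = a ∨ (S l).2.2 = a).card)) ∧
        (∀ a : ℤ, Even ((Finset.univ.filter fun l : Fin k =>
            ((S l).2.1 : ℤ) - ((S l).1 : ℤ) = a ∨
              ((S l).2.2 : ℤ) - ((S l).1 : ℤ) = a).card))) := by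
    constructor
    · intro h
      constructor
      · intro a
        rw [← hcd' a]
        by_cases ha : a ∈ Finset.univ.image (colF S)
        · exact h (Sum.inr a) (Finset.mem_union_right _ (Finset.mem_map_of_mem _ ha))
        · have h0 : (Finset.univ.filter fun q : Fin k × Fin 2 => colF S q = a).card = 0 := by
            rw [Finset.card_eq_zero, Finset.filter_eq_empty_iff]
            intro q _ hq
            exact ha (Finset.mem_image.mpr ⟨q, Finset.mem_univ q, hq⟩)
          rw [h0]
          exact Even.zero
      · intro a
        rw [← hct' a]
        by_cases ha : a ∈ Finset.univ.image (dgF S)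
        · exact h (Sum.inl a) (Finset.mem_union_left _ (Finset.mem_map_of_mem _ ha))
        · have h0 : (Finset.univ.filter fun q : Fin k × Fin 2 => dgF S q = a).card = 0 := by
            rw [Finset.card_eq_zero, Finset.filter_eq_empty_iff]
            intro q _ hq
            exact ha (Finset.mem_image.mpr ⟨q, Finset.mem_univ q, hq⟩)
          rw [h0]
          exact Even.zero
    · rintro ⟨h1, h2⟩ v hv
      cases v with
      | inl a =>
        show Even ((Finset.univ.filter fun q : Fin k × Fin 2 => dgF S q = a).card)
        rw [hct' a]
        exact h2 a
      | inr j =>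
        show Even ((Finset.univ.filter fun q : Fin k × Fin 2 => colF S q = j).card)
        rw [hcd' j]
        exact h1 j
  by_cases hcond : ((∀ a : ℕ, Even ((Finset.univ.filter fun l : Fin k =>
            (S l).2.1 = a ∨ (S l).2.2 = a).card)) ∧
        (∀ a : ℤ, Even ((Finset.univ.filter fun l : Fin k =>
            ((S l).2.1 : ℤ) - ((S l).1 : ℤ) = a ∨
              ((S l).2.2 : ℤ) - ((S l).1 : ℤ) = a).card)))
  · rw [if_pos (hiff.mpr hcond), if_pos hcond, mul_one]
    have heven : ∀ j : ℕ, Even ((Finset.univ.filter fun q : Fin k × Fin 2 => colF S q = j).card) := by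
      intro j
      rw [hcd' j]
      exact hcond.1 j
    rw [Finset.prod_comp (fun j : ℕ => x j) (colF S)]
    have hterm : ∀ j ∈ Finset.univ.image (colF S),
        x j ^ ((Finset.univ.filter fun q : Fin k × Fin 2 => colF S q = j).card)
        = ((1:ℝ)/s) ^ ((Finset.univ.filter fun q : Fin k × Fin 2 => colF S q = j).card / 2) := by
      intro j hj
      obtain ⟨q, -, rfl⟩ := Finset.mem_image.mp hj
      obtain ⟨e, he⟩ := heven (colF S q)
      rw [he, show e + e = 2 * e from by ring, Nat.mul_div_cancel_left _ (by norm_num), pow_mul,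
        hxsq _ (hcols q)]
    rw [Finset.prod_congr rfl hterm, Finset.prod_pow_eq_pow_sum]
    congr 1
    have htot : ∑ j ∈ Finset.univ.image (colF S),
        (Finset.univ.filter fun q : Fin k × Fin 2 => colF S q = j).card = k * 2 := by
      have hcardtot := Finset.card_eq_sum_card_image (colF S) (Finset.univ : Finset (Fin k × Fin 2))
      rw [Finset.card_univ, Fintype.card_prod, Fintype.card_fin, Fintype.card_fin] at hcardtot
      exact hcardtot.symm
    have hdouble : 2 * ∑ j ∈ Finset.univ.image (colF S),
        ((Finset.univ.filter fun q : Fin k × Fin 2 => colF S q = j).card / 2) = k * 2 := by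
      rw [Finset.mul_sum]
      rw [Finset.sum_congr rfl (fun j _ => Nat.mul_div_cancel' (heven j).two_dvd)]
      exact htot
    omega
  · rw [if_neg (fun hc => hcond (hiff.mp hc)), if_neg hcond, mul_zero]

lemma card_filter_or_congr {k : ℕ} {α β : Type*} [DecidableEq α] [DecidableEq β]
    (f g : Fin k → α) (f' g' : Fin k → β) (a : α) (b : β)
    (h : ∀ l, (f l = a ∨ g l = a) ↔ (f' l = b ∨ g' l = b)) :
    (Finset.univ.filter fun l => f l = a ∨ g l = a).card
      = (Finset.univ.filter fun l => f' l = b ∨ g' l = b).card := by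
  rw [Finset.card_filter, Finset.card_filter]
  exact Finset.sum_congr rfl fun l _ => by rw [if_congr (h l) rfl rfl]

end MomentGamma

open MomentGamma in
open scoped Classical in
/-- For even `k`, `E[Z_k] = Γ_k / (s^k m^k)`, where
`Z_k = (‖(1/√m) T D x‖² − 1)^k` and `Γ_k` counts tuples `S ∈ ([m] × [s] × [s])^k` with
`j ≠ h` in each triple, each column touched an even number of times, and each diagonal
touched an even number of times. -/
theorem moment_eq_gamma {Ω : Type*} [MeasurableSpace Ω] (μ : Measure Ω)
    [IsProbabilityMeasure μ]
    (m n s : ℕ) (hm : 0 < m) (hs : 0 < s) (hsn : s ≤ n)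
    (t : ℤ → Ω → ℝ) (d : ℕ → Ω → ℝ)
    (ht : ∀ a, Measurable (t a)) (hd : ∀ j, Measurable (d j))
    (hrad_t : ∀ a : ℤ, μ {ω | t a ω = 1} = 1/2 ∧ μ {ω | t a ω = -1} = 1/2)
    (hrad_d : ∀ j : ℕ, μ {ω | d j ω = 1} = 1/2 ∧ μ {ω | d j ω = -1} = 1/2)
    (hindep : ProbabilityTheory.iIndepFun (Sum.elim t d) μ)
    (x : ℕ → ℝ)
    (hx : ∀ j < s, x j = 1 / Real.sqrt s ∨ x j = -(1 / Real.sqrt s))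
    (hx0 : ∀ j, s ≤ j → x j = 0)
    (k : ℕ) (hk : 0 < k) (hkeven : Even k) :
    ∫ ω, ((1 / (m : ℝ)) * ∑ i ∈ Finset.range m,
        (∑ j ∈ Finset.range n, t ((j : ℤ) - (i : ℤ)) ω * d j ω * x j) ^ 2 - 1) ^ k ∂μ
    = (Nat.card {S : Fin k → Fin m × Fin s × Fin s //
          (∀ l, (S l).2.1 ≠ (S l).2.2) ∧
          (∀ a : Fin s,
            Even (Finset.univ.filter fun l => (S l).2.1 = a ∨ (S l).2.2 = a).card) ∧
          (∀ a : ℤ,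
            Even (Finset.univ.filter fun l =>
              ((S l).2.1 : ℤ) - ((S l).1 : ℤ) = a ∨
                ((S l).2.2 : ℤ) - ((S l).1 : ℤ) = a).card)} : ℝ) /
        ((s : ℝ) ^ k * (m : ℝ) ^ k) := by
  classical
  have hmR : (0:ℝ) < (m:ℝ) := by exact_mod_cast hm
  have hsR : (0:ℝ) < (s:ℝ) := by exact_mod_cast hs
  have hxsq : ∀ j, j < s → x j ^ 2 = 1 / (s:ℝ) := by
    intro j hj
    rcases hx j hj with h | h
    · rw [h, div_pow, one_pow, Real.sq_sqrt hsR.le]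
    · rw [h, show (-(1 / Real.sqrt (s:ℝ))) ^ 2 = (1 / Real.sqrt (s:ℝ)) ^ 2 from by ring,
        div_pow, one_pow, Real.sq_sqrt hsR.le]
  have hxb : ∀ j, |x j| ≤ 1 := by
    intro j
    by_cases hj : j < s
    · have hsqrt : (1:ℝ) ≤ Real.sqrt s := by
        rw [show (1:ℝ) = Real.sqrt 1 from (Real.sqrt_one).symm]
        exact Real.sqrt_le_sqrt (by exact_mod_cast hs)
      have h1 : |1 / Real.sqrt (s:ℝ)| ≤ 1 := by
        rw [abs_of_nonneg (by positivity)]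
        rw [div_le_one (by linarith)]
        linarith
      rcases hx j hj with h | h
      · rw [h]; exact h1
      · rw [h, abs_neg]; exact h1
    · rw [hx0 j (le_of_not_gt hj)]; simp
  set Eset : Finset (ℕ × ℕ × ℕ) := Finset.range m ×ˢ (Finset.range s).offDiag with hEset
  have hmemE : ∀ p : ℕ × ℕ × ℕ, p ∈ Eset ↔ p.1 < m ∧ p.2.1 < s ∧ p.2.2 < s ∧ p.2.1 ≠ p.2.2 := by
    intro p
    simp [hEset, Finset.mem_product, Finset.mem_offDiag, and_assoc]
  have hae : ∀ᵐ ω ∂μ, (∀ a : ℤ, t a ω = 1 ∨ t a ω = -1) ∧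
      (∀ j : ℕ, d j ω = 1 ∨ d j ω = -1) := by
    refine Filter.Eventually.and ?_ ?_
    · exact (MeasureTheory.ae_all_iff).mpr fun a => rad_ae (ht a) (hrad_t a).1 (hrad_t a).2
    · exact (MeasureTheory.ae_all_iff).mpr fun j => rad_ae (hd j) (hrad_d j).1 (hrad_d j).2
  -- pointwise expansion
  have hpoint : (fun ω => ((1 / (m : ℝ)) * ∑ i ∈ Finset.range m,
        (∑ j ∈ Finset.range n, t ((j : ℤ) - (i : ℤ)) ω * d j ω * x j) ^ 2 - 1) ^ k)
      =ᵐ[μ] fun ω => ∑ S ∈ Fintype.piFinset (fun _ : Fin k => Eset),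
        (1 / (m:ℝ))^k * ∏ l : Fin k,
          (t (((S l).2.1 : ℤ) - ((S l).1 : ℤ)) ω * t (((S l).2.2 : ℤ) - ((S l).1 : ℤ)) ω *
            d (S l).2.1 ω * d (S l).2.2 ω * (x (S l).2.1 * x (S l).2.2)) := by
    filter_upwards [hae] with ω hω
    obtain ⟨hωt, hωd⟩ := hω
    have hinner : ∀ i : ℕ, (∑ j ∈ Finset.range n, t ((j:ℤ)-(i:ℤ)) ω * d j ω * x j)
        = ∑ j ∈ Finset.range s, t ((j:ℤ)-(i:ℤ)) ω * d j ω * x j := by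
      intro i
      refine (Finset.sum_subset (Finset.range_subset_range.mpr hsn) ?_).symm
      intro j _ hj
      rw [hx0 j (by simpa using hj), mul_zero]
    have hsq : ∀ i : ℕ, (∑ j ∈ Finset.range s, t ((j:ℤ)-(i:ℤ)) ω * d j ω * x j) ^ 2
        = 1 + ∑ p ∈ (Finset.range s).offDiag,
            ((t ((p.1:ℤ)-(i:ℤ)) ω * d p.1 ω * x p.1) *
              (t ((p.2:ℤ)-(i:ℤ)) ω * d p.2 ω * x p.2)) := by
      intro i
      rw [sq, Finset.sum_mul_sum]
      rw [← Finset.sum_product' (s := Finset.range s) (t := Finset.range s)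
        (f := fun j h => (t ((j:ℤ)-(i:ℤ)) ω * d j ω * x j) *
          (t ((h:ℤ)-(i:ℤ)) ω * d h ω * x h))]
      rw [← Finset.diag_union_offDiag (Finset.range s),
        Finset.sum_union (Finset.disjoint_diag_offDiag _), Finset.sum_diag]
      congr 1
      have hdiagval : ∀ a ∈ Finset.range s,
          (t ((a:ℤ)-(i:ℤ)) ω * d a ω * x a) * (t ((a:ℤ)-(i:ℤ)) ω * d a ω * x a)
            = 1 / (s:ℝ) := by
        intro a ha
        have hx2 := hxsq a (Finset.mem_range.mp ha)
        rcases hωt ((a:ℤ)-(i:ℤ)) with h | h <;> rcases hωd a with h' | h' <;>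
          rw [h, h'] <;> linear_combination hx2
      rw [Finset.sum_congr rfl hdiagval, Finset.sum_const, Finset.card_range, nsmul_eq_mul,
        mul_one_div_cancel (ne_of_gt hsR)]
    have houter : (1 / (m : ℝ)) * ∑ i ∈ Finset.range m,
        (∑ j ∈ Finset.range n, t ((j:ℤ)-(i:ℤ)) ω * d j ω * x j) ^ 2 - 1
        = (1 / (m:ℝ)) * ∑ p ∈ Eset,
            (t (((p.2.1 : ℕ):ℤ) - ((p.1 : ℕ):ℤ)) ω * t (((p.2.2 : ℕ):ℤ) - ((p.1:ℕ):ℤ)) ω *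
              d p.2.1 ω * d p.2.2 ω * (x p.2.1 * x p.2.2)) := by
      rw [Finset.sum_congr rfl (fun i _ => by rw [hinner i, hsq i]),
        Finset.sum_add_distrib, Finset.sum_const, Finset.card_range, nsmul_eq_mul, mul_one]
      have hsum2 : ∑ i ∈ Finset.range m, ∑ p ∈ (Finset.range s).offDiag,
            ((t ((p.1:ℤ)-(i:ℤ)) ω * d p.1 ω * x p.1) *
              (t ((p.2:ℤ)-(i:ℤ)) ω * d p.2 ω * x p.2))
          = ∑ p ∈ Eset,
            (t (((p.2.1 : ℕ):ℤ) - ((p.1 : ℕ):ℤ)) ω * t (((p.2.2 : ℕ):ℤ) - ((p.1:ℕ):ℤ)) ω *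
              d p.2.1 ω * d p.2.2 ω * (x p.2.1 * x p.2.2)) := by
        rw [hEset, ← Finset.sum_product' (s := Finset.range m) (t := (Finset.range s).offDiag)
          (f := fun i q => (t ((q.1:ℤ)-(i:ℤ)) ω * d q.1 ω * x q.1) *
            (t ((q.2:ℤ)-(i:ℤ)) ω * d q.2 ω * x q.2))]
        exact Finset.sum_congr rfl fun p _ => by ring
      rw [hsum2]
      field_simp
      ring
    rw [houter, mul_pow]
    have hpow : (∑ p ∈ Eset,
          (t (((p.2.1 : ℕ):ℤ) - ((p.1 : ℕ):ℤ)) ω * t (((p.2.2 : ℕ):ℤ) - ((p.1:ℕ):ℤ)) ω *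
            d p.2.1 ω * d p.2.2 ω * (x p.2.1 * x p.2.2))) ^ k
        = ∑ S ∈ Fintype.piFinset (fun _ : Fin k => Eset), ∏ l : Fin k,
          (t (((S l).2.1 : ℤ) - ((S l).1 : ℤ)) ω * t (((S l).2.2 : ℤ) - ((S l).1 : ℤ)) ω *
            d (S l).2.1 ω * d (S l).2.2 ω * (x (S l).2.1 * x (S l).2.2)) := by
      rw [← Finset.prod_univ_sum (fun _ : Fin k => Eset)
        (fun _ p => t (((p.2.1 : ℕ):ℤ) - ((p.1 : ℕ):ℤ)) ω * t (((p.2.2 : ℕ):ℤ) - ((p.1:ℕ):ℤ)) ω *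
            d p.2.1 ω * d p.2.2 ω * (x p.2.1 * x p.2.2))]
      rw [Finset.prod_const, Finset.card_univ, Fintype.card_fin]
    rw [hpow, Finset.mul_sum]
  rw [MeasureTheory.integral_congr_ae hpoint]
  -- integrability
  have hGmeas : ∀ p : ℕ × ℕ × ℕ, Measurable fun ω =>
      t (((p.2.1 : ℕ):ℤ) - ((p.1 : ℕ):ℤ)) ω * t (((p.2.2 : ℕ):ℤ) - ((p.1:ℕ):ℤ)) ω *
        d p.2.1 ω * d p.2.2 ω * (x p.2.1 * x p.2.2) := by
    intro p
    exact ((((ht _).mul (ht _)).mul (hd _)).mul (hd _)).mul_const _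
  have hGbdd : ∀ p : ℕ × ℕ × ℕ, ∀ᵐ ω ∂μ, |t (((p.2.1 : ℕ):ℤ) - ((p.1 : ℕ):ℤ)) ω *
      t (((p.2.2 : ℕ):ℤ) - ((p.1:ℕ):ℤ)) ω * d p.2.1 ω * d p.2.2 ω *
      (x p.2.1 * x p.2.2)| ≤ 1 := by
    intro p
    filter_upwards [hae] with ω hω
    obtain ⟨hωt, hωd⟩ := hω
    have hb : ∀ a : ℤ, |t a ω| = 1 := by
      intro a; rcases hωt a with h | h <;> simp [h]
    have hb' : ∀ j : ℕ, |d j ω| = 1 := by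
      intro j; rcases hωd j with h | h <;> simp [h]
    rw [abs_mul, abs_mul, abs_mul, abs_mul, hb, hb, hb', hb', abs_mul]
    have := mul_le_one₀ (hxb p.2.1) (abs_nonneg _) (hxb p.2.2)
    nlinarith [abs_nonneg (x p.2.1), abs_nonneg (x p.2.2)]
  have hint : ∀ S ∈ Fintype.piFinset (fun _ : Fin k => Eset),
      Integrable (fun ω => (1 / (m:ℝ))^k * ∏ l : Fin k,
        (t (((S l).2.1 : ℤ) - ((S l).1 : ℤ)) ω * t (((S l).2.2 : ℤ) - ((S l).1 : ℤ)) ω *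
          d (S l).2.1 ω * d (S l).2.2 ω * (x (S l).2.1 * x (S l).2.2))) μ := by
    intro S _
    refine Integrable.const_mul ?_ _
    refine integrable_of_ae_bdd (C := 1)
      ((Finset.measurable_prod _ (fun l _ => hGmeas (S l))).aestronglyMeasurable) ?_
    exact ae_abs_prod_le_one Finset.univ (fun l _ => hGbdd (S l))
  rw [MeasureTheory.integral_finset_sum _ hint]
  -- per-tuple computation
  have hper : ∀ S ∈ Fintype.piFinset (fun _ : Fin k => Eset),
      ∫ ω, (1 / (m:ℝ))^k * ∏ l : Fin k,
        (t (((S l).2.1 : ℤ) - ((S l).1 : ℤ)) ω * t (((S l).2.2 : ℤ) - ((S l).1 : ℤ)) ω *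
          d (S l).2.1 ω * d (S l).2.2 ω * (x (S l).2.1 * x (S l).2.2)) ∂μ
      = (1 / (m:ℝ))^k * (if ((∀ a : ℕ, Even ((Finset.univ.filter fun l : Fin k =>
            (S l).2.1 = a ∨ (S l).2.2 = a).card)) ∧
        (∀ a : ℤ, Even ((Finset.univ.filter fun l : Fin k =>
            ((S l).2.1 : ℤ) - ((S l).1 : ℤ) = a ∨
              ((S l).2.2 : ℤ) - ((S l).1 : ℤ) = a).card)))
        then (1 / (s:ℝ)) ^ k else 0) := by
    intro S hSmem
    rw [MeasureTheory.integral_const_mul]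
    congr 1
    refine per_tuple μ s hs t d ht hd hrad_t hrad_d hindep x hx k S ?_
    intro l
    have := (hmemE (S l)).mp (Fintype.mem_piFinset.mp hSmem l)
    exact ⟨this.2.1, this.2.2.1, this.2.2.2⟩
  rw [Finset.sum_congr rfl hper]
  -- sum of indicators
  set P : (Fin k → ℕ × ℕ × ℕ) → Prop := fun S =>
    ((∀ a : ℕ, Even ((Finset.univ.filter fun l : Fin k =>
          (S l).2.1 = a ∨ (S l).2.2 = a).card)) ∧
      (∀ a : ℤ, Even ((Finset.univ.filter fun l : Fin k =>
          ((S l).2.1 : ℤ) - ((S l).1 : ℤ) = a ∨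
            ((S l).2.2 : ℤ) - ((S l).1 : ℤ) = a).card))) with hP
  have hsumcount : ∑ S ∈ Fintype.piFinset (fun _ : Fin k => Eset),
      (1 / (m:ℝ))^k * (if P S then (1 / (s:ℝ)) ^ k else 0)
      = (((Fintype.piFinset (fun _ : Fin k => Eset)).filter P).card : ℝ) *
        ((1 / (m:ℝ))^k * (1 / (s:ℝ))^k) := by
    rw [Finset.sum_congr rfl (fun S _ => by rw [mul_ite, mul_zero])]
    rw [← Finset.sum_filter]
    rw [Finset.sum_const, nsmul_eq_mul]
  rw [hsumcount]
  -- counting bijection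
  have hcount : ((Fintype.piFinset (fun _ : Fin k => Eset)).filter P).card
      = Nat.card {S : Fin k → Fin m × Fin s × Fin s //
          (∀ l, (S l).2.1 ≠ (S l).2.2) ∧
          (∀ a : Fin s,
            Even (Finset.univ.filter fun l => (S l).2.1 = a ∨ (S l).2.2 = a).card) ∧
          (∀ a : ℤ,
            Even (Finset.univ.filter fun l =>
              ((S l).2.1 : ℤ) - ((S l).1 : ℤ) = a ∨
                ((S l).2.2 : ℤ) - ((S l).1 : ℤ) = a).card)} := by
    rw [Nat.card_eq_fintype_card, Fintype.card_subtype]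
    refine Finset.card_nbij'
      (i := fun T => fun l : Fin k =>
        ((⟨(T l).1 % m, Nat.mod_lt _ hm⟩ : Fin m),
         (⟨(T l).2.1 % s, Nat.mod_lt _ hs⟩ : Fin s),
         (⟨(T l).2.2 % s, Nat.mod_lt _ hs⟩ : Fin s)))
      (j := fun R => fun l : Fin k => (((R l).1 : ℕ), ((R l).2.1 : ℕ), ((R l).2.2 : ℕ)))
      ?_ ?_ ?_ ?_
    · -- forward membership
      intro T hT
      obtain ⟨hTpi, hTP⟩ := Finset.mem_filter.mp hT
      have hb : ∀ l, (T l).1 < m ∧ (T l).2.1 < s ∧ (T l).2.2 < s ∧ (T l).2.1 ≠ (T l).2.2 :=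
        fun l => (hmemE (T l)).mp (Fintype.mem_piFinset.mp hTpi l)
      rw [Finset.mem_coe, Finset.mem_filter]
      refine ⟨Finset.mem_univ _, ?_, ?_, ?_⟩
      · intro l heq
        apply (hb l).2.2.2
        have := congrArg Fin.val heq
        simpa [Nat.mod_eq_of_lt (hb l).2.1, Nat.mod_eq_of_lt (hb l).2.2.1] using this
      · intro a
        have hEv := hTP.1 (a : ℕ)
        have hcc := card_filter_or_congr
          (f := fun l => (T l).2.1) (g := fun l => (T l).2.2)
          (f' := fun l => (⟨(T l).2.1 % s, Nat.mod_lt _ hs⟩ : Fin s))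
          (g' := fun l => (⟨(T l).2.2 % s, Nat.mod_lt _ hs⟩ : Fin s))
          (a := (a : ℕ)) (b := a)
          (fun l => by
            simp [Fin.ext_iff, Nat.mod_eq_of_lt (hb l).2.1, Nat.mod_eq_of_lt (hb l).2.2.1])
        rw [← hcc]
        exact hEv
      · intro a
        have hEv := hTP.2 a
        have hcc := card_filter_or_congr
          (f := fun l => ((T l).2.1 : ℤ) - ((T l).1 : ℤ))
          (g := fun l => ((T l).2.2 : ℤ) - ((T l).1 : ℤ))
          (f' := fun l => (((⟨(T l).2.1 % s, Nat.mod_lt _ hs⟩ : Fin s) : ℕ) : ℤ) -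
            (((⟨(T l).1 % m, Nat.mod_lt _ hm⟩ : Fin m) : ℕ) : ℤ))
          (g' := fun l => (((⟨(T l).2.2 % s, Nat.mod_lt _ hs⟩ : Fin s) : ℕ) : ℤ) -
            (((⟨(T l).1 % m, Nat.mod_lt _ hm⟩ : Fin m) : ℕ) : ℤ))
          (a := a) (b := a)
          (fun l => by
            simp [Nat.mod_eq_of_lt (hb l).1, Nat.mod_eq_of_lt (hb l).2.1,
              Nat.mod_eq_of_lt (hb l).2.2.1])
        rw [← hcc]
        exact hEv
    · -- backward membership
      intro R hR
      obtain ⟨-, hQ1, hQ2, hQ3⟩ := Finset.mem_filter.mp hR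
      rw [Finset.mem_coe, Finset.mem_filter]
      constructor
      · rw [Fintype.mem_piFinset]
        intro l
        rw [hmemE]
        refine ⟨(R l).1.isLt, (R l).2.1.isLt, (R l).2.2.isLt, ?_⟩
        intro heq
        exact hQ1 l (Fin.val_injective heq)
      · constructor
        · intro a
          by_cases ha : a < s
          · have hEv := hQ2 ⟨a, ha⟩
            have hcc := card_filter_or_congr
              (f := fun l => ((R l).2.1 : ℕ)) (g := fun l => ((R l).2.2 : ℕ))
              (f' := fun l => (R l).2.1) (g' := fun l => (R l).2.2)
              (a := a) (b := (⟨a, ha⟩ : Fin s))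
              (fun l => by simp [Fin.ext_iff])
            rw [hcc]
            exact hEv
          · have h0 : (Finset.univ.filter fun l : Fin k =>
                ((R l).2.1 : ℕ) = a ∨ ((R l).2.2 : ℕ) = a).card = 0 := by
              rw [Finset.card_eq_zero, Finset.filter_eq_empty_iff]
              intro l _ hor
              rcases hor with h | h
              · exact ha (h ▸ (R l).2.1.isLt)
              · exact ha (h ▸ (R l).2.2.isLt)
            rw [h0]
            exact Even.zero
        · intro a
          exact hQ3 a
    · -- left inverse
      intro T hT
      obtain ⟨hTpi, -⟩ := Finset.mem_filter.mp hT
      have hb : ∀ l, (T l).1 < m ∧ (T l).2.1 < s ∧ (T l).2.2 < s ∧ (T l).2.1 ≠ (T l).2.2 :=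
        fun l => (hmemE (T l)).mp (Fintype.mem_piFinset.mp hTpi l)
      funext l
      show ((T l).1 % m, (T l).2.1 % s, (T l).2.2 % s) = T l
      rw [Nat.mod_eq_of_lt (hb l).1, Nat.mod_eq_of_lt (hb l).2.1,
        Nat.mod_eq_of_lt (hb l).2.2.1]
    · -- right inverse
      intro R hR
      funext l
      refine Prod.ext ?_ (Prod.ext ?_ ?_)
      · show (⟨((R l).1 : ℕ) % m, _⟩ : Fin m) = (R l).1
        apply Fin.val_injective
        exact Nat.mod_eq_of_lt (R l).1.isLt
      · show (⟨((R l).2.1 : ℕ) % s, _⟩ : Fin s) = (R l).2.1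
        apply Fin.val_injective
        exact Nat.mod_eq_of_lt (R l).2.1.isLt
      · show (⟨((R l).2.2 : ℕ) % s, _⟩ : Fin s) = (R l).2.2
        apply Fin.val_injective
        exact Nat.mod_eq_of_lt (R l).2.2.isLt
  have hconst : ((1:ℝ)/m)^k * ((1:ℝ)/s)^k = 1/((s:ℝ)^k*(m:ℝ)^k) := by
    rw [div_pow, div_pow, one_pow]
    rw [div_mul_div_comm, one_mul, mul_comm]

  rw [hcount, hconst, mul_one_div]

-- end of file
end

section
/- Suppose that for every unit vector x ∈ ℝ^n, Pr[ |‖(1/√m) T D x‖₂² − 1| < ε ] > 1 − δ, where T, D are the Toeplitz and diagonal Rademacher matrices. If additionally the single-vector failure bound Pr[failure] ≥ 2^{−C ε √m} holds for some unit vector (as guaranteed by the main theorem), then m ≥ c · ε^{−2} · log²(1/δ) for some absolute constant c > 0. -/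
open MeasureTheory Finset

/-- If every unit vector has its norm preserved within `ε` with probability `> 1 − δ` by the
Toeplitz-times-diagonal Rademacher embedding, while some unit vector fails with probability
at least `2^{−Cε√m}`, then `m ≥ c ε^{−2} log²(1/δ)` for a constant `c > 0` depending only
on `C`. -/
theorem dimension_lower_bound (C : ℝ) (hC : 0 < C) :
    ∃ c : ℝ, 0 < c ∧
      ∀ {Ω : Type} [MeasurableSpace Ω] (μ : Measure Ω), IsProbabilityMeasure μ →
      ∀ (m n : ℕ), 0 < m →
      ∀ (t : ℤ → Ω → ℝ) (d : ℕ → Ω → ℝ),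
      (∀ a, Measurable (t a)) → (∀ j, Measurable (d j)) →
      (∀ a : ℤ, μ {ω | t a ω = 1} = 1/2 ∧ μ {ω | t a ω = -1} = 1/2) →
      (∀ j : ℕ, μ {ω | d j ω = 1} = 1/2 ∧ μ {ω | d j ω = -1} = 1/2) →
      ProbabilityTheory.iIndepFun (Sum.elim t d) μ →
      ∀ ε δ : ℝ, 0 < ε → 0 < δ → δ < 1 →
      (∀ x : ℕ → ℝ, (∑ j ∈ Finset.range n, x j ^ 2 = 1) →
        1 - δ < (μ {ω | |(1 / (m : ℝ)) * ∑ i ∈ Finset.range m,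
            (∑ j ∈ Finset.range n, t ((j : ℤ) - (i : ℤ)) ω * d j ω * x j) ^ 2 - 1| < ε}).toReal) →
      (∃ x : ℕ → ℝ, (∑ j ∈ Finset.range n, x j ^ 2 = 1) ∧
        (2 : ℝ) ^ (-(C * ε * Real.sqrt m)) ≤
          (μ {ω | ε < |(1 / (m : ℝ)) * ∑ i ∈ Finset.range m,
              (∑ j ∈ Finset.range n, t ((j : ℤ) - (i : ℤ)) ω * d j ω * x j) ^ 2 - 1|}).toReal) →
      c * ε⁻¹ ^ 2 * Real.log (1 / δ) ^ 2 ≤ (m : ℝ) := by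
  have hlog2 : (0:ℝ) < Real.log 2 := Real.log_pos (by norm_num)
  refine ⟨((C * Real.log 2)⁻¹) ^ 2, by positivity, ?_⟩
  intro Ω _ μ hμ m n hm t d ht hd _ _ _ ε δ hε hδ hδ1 hsucc hfail
  obtain ⟨x, hx, hfail⟩ := hfail
  set f : Ω → ℝ := fun ω => (1 / (m : ℝ)) * ∑ i ∈ Finset.range m,
      (∑ j ∈ Finset.range n, t ((j : ℤ) - (i : ℤ)) ω * d j ω * x j) ^ 2 - 1 with hf
  have hS := hsucc x hx
  have hmf : Measurable f := by
    apply Measurable.sub _ measurable_const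
    apply Measurable.const_mul
    apply Finset.measurable_sum
    intro i _
    apply Measurable.pow _ measurable_const
    apply Finset.measurable_sum
    intro j _
    exact ((ht _).mul (hd j)).mul_const _
  have hSmeas : MeasurableSet {ω | |f ω| < ε} :=
    measurableSet_lt hmf.abs measurable_const
  -- failure set is contained in the complement of the success set
  have hsub : {ω | ε < |f ω|} ⊆ {ω | |f ω| < ε}ᶜ := by
    intro ω hω
    simp only [Set.mem_compl_iff, Set.mem_setOf_eq, not_lt] at *
    exact le_of_lt hω
  have hcompl : μ {ω | |f ω| < ε}ᶜ = 1 - μ {ω | |f ω| < ε} := by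
    rw [measure_compl hSmeas (measure_ne_top μ _), measure_univ]
  have hle : (μ {ω | ε < |f ω|}).toReal ≤ 1 - (μ {ω | |f ω| < ε}).toReal := by
    have h1 : (μ {ω | ε < |f ω|}).toReal ≤ (μ {ω | |f ω| < ε}ᶜ).toReal := by
      exact ENNReal.toReal_mono (measure_ne_top μ _) (measure_mono hsub)
    rw [hcompl, ENNReal.toReal_sub_of_le prob_le_one ENNReal.one_ne_top] at h1
    simpa using h1
  have hkey : (2 : ℝ) ^ (-(C * ε * Real.sqrt m)) < δ := by
    have := hfail.trans hle
    linarith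
  -- take logarithms
  have hloglt : -(C * ε * Real.sqrt m) * Real.log 2 < Real.log δ := by
    have := Real.log_lt_log (Real.rpow_pos_of_pos (by norm_num) _) hkey
    rwa [Real.log_rpow (by norm_num)] at this
  have hL : Real.log (1 / δ) < C * ε * Real.sqrt m * Real.log 2 := by
    rw [one_div, Real.log_inv]
    linarith
  have hLpos : 0 < Real.log (1 / δ) := Real.log_pos (by
    rw [one_div]
    exact (one_lt_inv₀ hδ).mpr hδ1)
  have hsqrt : Real.log (1 / δ) / (C * ε * Real.log 2) < Real.sqrt m := by
    rw [div_lt_iff₀ (by positivity)]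
    linarith [hL]
  have hsq : (Real.log (1 / δ) / (C * ε * Real.log 2)) ^ 2 ≤ (Real.sqrt m) ^ 2 := by
    apply pow_le_pow_left₀ (by positivity) (le_of_lt hsqrt)
  rw [Real.sq_sqrt (Nat.cast_nonneg m)] at hsq
  refine le_trans (le_of_eq ?_) hsq
  field_simp
end

section
/- Let x ∈ ℝ^n have support contained in {1, …, r} and let x_{→i} denote x shifted by i coordinates (coordinate j of x_{→i} equals coordinate j−i of x when j > i, else 0). With T the m × n Toeplitz matrix and D the diagonal matrix built from independent Rademacher variables, if i ≤ n − r then T D x and T D x_{→i} have the same distribution, and if additionally i ≥ m + r then T D x and T D x_{→i} are independent random vectors. -/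
open MeasureTheory Finset

section Aux
open ProbabilityTheory

noncomputable def radMeasure : Measure ℝ :=
  (2⁻¹ : ENNReal) • Measure.dirac 1 + (2⁻¹ : ENNReal) • Measure.dirac (-1)

lemma map_rad {Ω : Type*} [MeasurableSpace Ω] {μ : Measure Ω} [IsProbabilityMeasure μ]
    {X : Ω → ℝ} (hX : Measurable X)
    (h1 : μ {ω | X ω = 1} = 1/2) (h2 : μ {ω | X ω = -1} = 1/2) :
    μ.map X = radMeasure := by
  have hA : MeasurableSet (X ⁻¹' {(1:ℝ)}) := hX (measurableSet_singleton _)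
  have hB : MeasurableSet (X ⁻¹' {(-1:ℝ)}) := hX (measurableSet_singleton _)
  have hA2 : μ (X ⁻¹' {(1:ℝ)}) = 1/2 := h1
  have hB2 : μ (X ⁻¹' {(-1:ℝ)}) = 1/2 := h2
  have hdisj : Disjoint (X ⁻¹' {(1:ℝ)}) (X ⁻¹' {(-1:ℝ)}) := by
    rw [Set.disjoint_left]
    intro ω hω1 hω2
    simp only [Set.mem_preimage, Set.mem_singleton_iff] at hω1 hω2
    norm_num [hω1] at hω2
  have hunion : μ (X ⁻¹' {(1:ℝ)} ∪ X ⁻¹' {(-1:ℝ)}) = 1 := by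
    rw [measure_union hdisj hB, hA2, hB2]
    rw [ENNReal.div_add_div_same]
    rw [one_add_one_eq_two]
    exact ENNReal.div_self two_ne_zero ENNReal.ofNat_ne_top
  have hcompl : μ ((X ⁻¹' {(1:ℝ)} ∪ X ⁻¹' {(-1:ℝ)})ᶜ) = 0 := by
    rw [measure_compl (hA.union hB) (measure_ne_top _ _), hunion, measure_univ, tsub_self]
  classical
  ext s hs
  rw [Measure.map_apply hX hs]
  have key : μ (X ⁻¹' s) = μ (X ⁻¹' s ∩ X ⁻¹' {(1:ℝ)}) + μ (X ⁻¹' s ∩ X ⁻¹' {(-1:ℝ)}) := by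
    have h0 : μ (X ⁻¹' s \ (X ⁻¹' {(1:ℝ)} ∪ X ⁻¹' {(-1:ℝ)})) = 0 :=
      measure_mono_null (Set.diff_subset_compl _ _) hcompl
    have := measure_inter_add_diff (μ := μ) (X ⁻¹' s) (hA.union hB)
    rw [Set.inter_union_distrib_left] at this
    rw [← this, h0, add_zero,
      measure_union (hdisj.mono Set.inter_subset_right Set.inter_subset_right)
        ((hX hs).inter hB)]
  have e1 : X ⁻¹' s ∩ X ⁻¹' {(1:ℝ)} = if (1:ℝ) ∈ s then X ⁻¹' {(1:ℝ)} else ∅ := by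
    split_ifs with h
    · ext ω; simp only [Set.mem_inter_iff, Set.mem_preimage, Set.mem_singleton_iff]
      exact ⟨fun h' => h'.2, fun h' => ⟨by rw [h']; exact h, h'⟩⟩
    · ext ω; simp only [Set.mem_inter_iff, Set.mem_preimage, Set.mem_singleton_iff,
        Set.mem_empty_iff_false, iff_false]
      rintro ⟨h1', h2'⟩; exact h (h2' ▸ h1')
  have e2 : X ⁻¹' s ∩ X ⁻¹' {(-1:ℝ)} = if (-1:ℝ) ∈ s then X ⁻¹' {(-1:ℝ)} else ∅ := by
    split_ifs with h
    · ext ω; simp only [Set.mem_inter_iff, Set.mem_preimage, Set.mem_singleton_iff]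
      exact ⟨fun h' => h'.2, fun h' => ⟨by rw [h']; exact h, h'⟩⟩
    · ext ω; simp only [Set.mem_inter_iff, Set.mem_preimage, Set.mem_singleton_iff,
        Set.mem_empty_iff_false, iff_false]
      rintro ⟨h1', h2'⟩; exact h (h2' ▸ h1')
  rw [key, e1, e2]
  simp only [radMeasure, Measure.add_apply, Measure.smul_apply, smul_eq_mul,
    Measure.dirac_apply' _ hs]
  by_cases h1s : (1:ℝ) ∈ s <;> by_cases h2s : (-1:ℝ) ∈ s <;>
    simp [h1s, h2s, hA2, hB2, Set.indicator, ENNReal.div_eq_inv_mul]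

lemma joint_eq_pi {Ω : Type*} [MeasurableSpace Ω] {μ : Measure Ω} [IsProbabilityMeasure μ]
    {κ : Type*} [Fintype κ]
    (X : κ → Ω → ℝ) (hX : ∀ k, Measurable (X k))
    (hind : iIndepFun X μ) :
    μ.map (fun ω k => X k ω) = Measure.pi (fun k => μ.map (X k)) := by
  haveI : ∀ k, IsProbabilityMeasure (μ.map (X k)) :=
    fun k => Measure.isProbabilityMeasure_map (hX k).aemeasurable
  symm
  refine Measure.pi_eq (fun s hs => ?_)
  rw [Measure.map_apply (measurable_pi_lambda _ hX) (MeasurableSet.univ_pi hs)]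
  have hpre : (fun ω k => X k ω) ⁻¹' Set.pi Set.univ s = ⋂ k ∈ Finset.univ, X k ⁻¹' s k := by
    ext ω; simp [Set.mem_pi]
  rw [hpre, hind.measure_inter_preimage_eq_mul Finset.univ (fun k _ => hs k)]
  exact Finset.prod_congr rfl fun k _ => (Measure.map_apply (hX k) (hs k)).symm

lemma iIndepFun_reindex {Ω : Type*} [MeasurableSpace Ω] {μ : Measure Ω}
    {ι κ : Type*} {X : ι → Ω → ℝ}
    (hind : iIndepFun X μ) (e : κ → ι) (he : Function.Injective e) :
    iIndepFun (fun k => X (e k)) μ := by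
  classical
  rw [ProbabilityTheory.iIndepFun_iff_measure_inter_preimage_eq_mul] at hind ⊢
  intro S sets hsets
  rcases S.eq_empty_or_nonempty with rfl | ⟨k₀, hk₀⟩
  · simpa using hind (∅ : Finset ι) (sets := fun _ => Set.univ) (by simp)
  haveI : Nonempty κ := ⟨k₀⟩
  have hleft : ∀ k, Function.invFun e (e k) = k := Function.leftInverse_invFun he
  have := hind (S.image e) (sets := fun j => sets (Function.invFun e j))
    (by intro j hj
        obtain ⟨k, hk, rfl⟩ := Finset.mem_image.mp hj
        simp only [hleft]; exact hsets k hk)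
  rw [Finset.prod_image (fun a _ b _ h => he h)] at this
  have hiInter : (⋂ j ∈ S.image e, X j ⁻¹' sets (Function.invFun e j)) =
      ⋂ k ∈ S, X (e k) ⁻¹' sets k := by
    rw [Finset.set_biInter_finset_image]
    exact Set.iInter₂_congr fun k _ => by simp only [hleft]
  rw [hiInter] at this
  rw [this]
  exact Finset.prod_congr rfl fun k _ => by simp only [hleft]

lemma meas_eval_dite {S : Finset (ℤ ⊕ ℕ)} (k : ℤ ⊕ ℕ) :
    Measurable (fun v : (↥S → ℝ) => if h : k ∈ S then v ⟨k, h⟩ else 0) := by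
  by_cases h : k ∈ S
  · simp only [dif_pos h]; exact measurable_pi_apply _
  · simp only [dif_neg h]; exact measurable_const


end Aux

open ProbabilityTheory

/-- Shift invariance and independence: if `x` is supported on its first `r` coordinates and
`x_{→i}` denotes `x` shifted by `i`, then for `i ≤ n − r` the random vectors `T D x` and
`T D x_{→i}` are identically distributed, and if additionally `i ≥ m + r` they are
independent. -/
theorem shifted_vectors_distribution {Ω : Type*} [MeasurableSpace Ω] (μ : Measure Ω)
    [IsProbabilityMeasure μ]
    (m n r : ℕ) (hm : 0 < m)
    (t : ℤ → Ω → ℝ) (d : ℕ → Ω → ℝ)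
    (ht : ∀ a, Measurable (t a)) (hd : ∀ j, Measurable (d j))
    (hrad_t : ∀ a : ℤ, μ {ω | t a ω = 1} = 1/2 ∧ μ {ω | t a ω = -1} = 1/2)
    (hrad_d : ∀ j : ℕ, μ {ω | d j ω = 1} = 1/2 ∧ μ {ω | d j ω = -1} = 1/2)
    (hindep : ProbabilityTheory.iIndepFun (Sum.elim t d) μ)
    (x : ℕ → ℝ) (hsupp : ∀ j, r ≤ j → x j = 0)
    (i : ℕ) (hin : i + r ≤ n) :
    Measure.map (fun ω (i' : Fin m) =>
        ∑ j ∈ Finset.range n, t ((j : ℤ) - (i' : ℤ)) ω * d j ω * x j) μ =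
      Measure.map (fun ω (i' : Fin m) =>
        ∑ j ∈ Finset.range n, t ((j : ℤ) - (i' : ℤ)) ω * d j ω *
          (if i ≤ j then x (j - i) else 0)) μ ∧
    (m + r ≤ i →
      ProbabilityTheory.IndepFun
        (fun ω (i' : Fin m) =>
          ∑ j ∈ Finset.range n, t ((j : ℤ) - (i' : ℤ)) ω * d j ω * x j)
        (fun ω (i' : Fin m) =>
          ∑ j ∈ Finset.range n, t ((j : ℤ) - (i' : ℤ)) ω * d j ω *
            (if i ≤ j then x (j - i) else 0)) μ) := by
  classical
  have hrn : r ≤ n := le_trans (Nat.le_add_left r i) hin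
  have hmeasSum : ∀ s : ℤ ⊕ ℕ, Measurable (Sum.elim t d s) := by
    rintro (a | j); exacts [ht a, hd j]
  set F₁ : Ω → Fin m → ℝ :=
    fun ω i' => ∑ j : Fin r, t ((j : ℤ) - (i' : ℤ)) ω * d j ω * x j with hF₁def
  set F₂ : Ω → Fin m → ℝ :=
    fun ω i' => ∑ j : Fin r, t ((j : ℤ) + (i : ℤ) - (i' : ℤ)) ω * d ((j : ℕ) + i) ω * x j
    with hF₂def
  have hE₁ : (fun ω (i' : Fin m) =>
      ∑ j ∈ Finset.range n, t ((j : ℤ) - (i' : ℤ)) ω * d j ω * x j) = F₁ := by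
    funext ω i'
    show _ = ∑ j : Fin r, t ((j : ℤ) - (i' : ℤ)) ω * d (j : ℕ) ω * x (j : ℕ)
    rw [Fin.sum_univ_eq_sum_range (fun j => t ((j : ℤ) - (i' : ℤ)) ω * d j ω * x j) r]
    refine (Finset.sum_subset (Finset.range_subset_range.mpr hrn) (fun j _ hj => ?_)).symm
    rw [hsupp j (by simpa using hj), mul_zero]
  have hE₂ : (fun ω (i' : Fin m) =>
      ∑ j ∈ Finset.range n, t ((j : ℤ) - (i' : ℤ)) ω * d j ω *
        (if i ≤ j then x (j - i) else 0)) = F₂ := by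
    funext ω i'
    show _ = ∑ j : Fin r, t ((j : ℤ) + (i : ℤ) - (i' : ℤ)) ω * d ((j : ℕ) + i) ω * x (j : ℕ)
    have h1 : ∑ j ∈ Finset.range n, t ((j : ℤ) - (i' : ℤ)) ω * d j ω *
        (if i ≤ j then x (j - i) else 0)
        = ∑ j ∈ Finset.Ico i (i + r), t ((j : ℤ) - (i' : ℤ)) ω * d j ω *
          (if i ≤ j then x (j - i) else 0) := by
      refine (Finset.sum_subset ?_ ?_).symm
      · intro j hj; rw [Finset.mem_Ico] at hj; rw [Finset.mem_range]; omega
      · intro j hj hj'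
        rw [Finset.mem_range] at hj; rw [Finset.mem_Ico] at hj'
        by_cases hij : i ≤ j
        · rw [if_pos hij, hsupp (j - i) (by omega), mul_zero]
        · rw [if_neg hij, mul_zero]
    rw [h1, Finset.sum_Ico_eq_sum_range]
    simp only [Nat.add_sub_cancel_left]
    rw [← Fin.sum_univ_eq_sum_range (fun k => t ((i + k : ℕ) - (i' : ℤ)) ω * d (i + k) ω *
      (if i ≤ i + k then x k else 0)) r]
    refine Finset.sum_congr rfl fun k _ => ?_
    have harg : ((i + (k : ℕ) : ℕ) : ℤ) - (i' : ℤ) = ((k : ℕ) : ℤ) + (i : ℤ) - (i' : ℤ) := by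
      push_cast; ring
    rw [harg, if_pos (Nat.le_add_right i (k : ℕ)), Nat.add_comm i (k : ℕ)]
  -- the reindexing maps
  set e : ℕ → (Fin (m + r) ⊕ Fin r) → ℤ ⊕ ℕ := fun c k =>
    Sum.elim (fun a : Fin (m + r) => Sum.inl ((a : ℤ) - (m : ℤ) + 1 + (c : ℤ)))
      (fun j : Fin r => Sum.inr ((j : ℕ) + c)) k with hedef
  have he : ∀ c, Function.Injective (e c) := by
    intro c k₁ k₂ h
    rcases k₁ with a₁ | j₁ <;> rcases k₂ with a₂ | j₂ <;>
      simp only [hedef, Sum.elim_inl, Sum.elim_inr, Sum.inl.injEq, Sum.inr.injEq,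
        reduceCtorEq] at h
    · exact congrArg Sum.inl (Fin.ext (by omega))
    · exact congrArg Sum.inr (Fin.ext (by omega))
  have hYindep : ∀ c, iIndepFun
      (fun k => Sum.elim t d (e c k)) μ := fun c => iIndepFun_reindex hindep (e c) (he c)
  have hYrad : ∀ c k, μ.map (Sum.elim t d (e c k)) = radMeasure := by
    rintro c (a | j)
    · exact map_rad (ht _) (hrad_t _).1 (hrad_t _).2
    · exact map_rad (hd _) (hrad_d _).1 (hrad_d _).2
  have hΦmeas : ∀ c, Measurable (fun ω (k : Fin (m + r) ⊕ Fin r) => Sum.elim t d (e c k) ω) :=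
    fun c => measurable_pi_lambda _ fun k => hmeasSum _
  have hjoint : ∀ c, μ.map (fun ω (k : Fin (m + r) ⊕ Fin r) => Sum.elim t d (e c k) ω)
      = Measure.pi (fun _ => radMeasure) := by
    intro c
    rw [joint_eq_pi _ (fun k => hmeasSum _) (hYindep c)]
    exact congrArg Measure.pi (funext fun k => hYrad c k)
  set G : ((Fin (m + r) ⊕ Fin r) → ℝ) → Fin m → ℝ := fun v i' =>
    ∑ j : Fin r, v (Sum.inl ⟨m - 1 - (i' : ℕ) + (j : ℕ),
      by have := i'.2; have := j.2; omega⟩) * v (Sum.inr j) * x j with hGdef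
  have hGmeas : Measurable G := by
    apply measurable_pi_lambda
    intro i'
    refine Finset.measurable_sum _ fun j _ => ?_
    fun_prop
  have hGcomp : ∀ c : ℕ, (fun ω => G (fun k => Sum.elim t d (e c k) ω))
      = fun ω (i' : Fin m) =>
        ∑ j : Fin r, t ((j : ℤ) - (i' : ℤ) + (c : ℤ)) ω * d ((j : ℕ) + c) ω * x j := by
    intro c
    funext ω i'
    refine Finset.sum_congr rfl fun j _ => ?_
    show t (((m - 1 - (i' : ℕ) + (j : ℕ) : ℕ) : ℤ) - (m : ℤ) + 1 + (c : ℤ)) ω *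
      d ((j : ℕ) + c) ω * x j = _
    have harg : ((m - 1 - (i' : ℕ) + (j : ℕ) : ℕ) : ℤ) - (m : ℤ) + 1 + (c : ℤ)
        = (j : ℤ) - (i' : ℤ) + (c : ℤ) := by
      have h1 := i'.2; have h2 := j.2
      omega
    rw [harg]
  have hc₁ : F₁ = fun ω => G (fun k => Sum.elim t d (e 0 k) ω) := by
    rw [hGcomp 0, hF₁def]
    funext ω i'
    refine Finset.sum_congr rfl fun j _ => ?_
    norm_num
  have hc₂ : F₂ = fun ω => G (fun k => Sum.elim t d (e i k) ω) := by
    rw [hGcomp i, hF₂def]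
    funext ω i'
    refine Finset.sum_congr rfl fun j _ => ?_
    have : (j : ℤ) + (i : ℤ) - (i' : ℤ) = (j : ℤ) - (i' : ℤ) + (i : ℤ) := by ring
    rw [this]
  have hmapeq : μ.map F₁ = μ.map F₂ := by
    rw [hc₁, hc₂]
    have e₁ : μ.map (fun ω => G (fun k => Sum.elim t d (e 0 k) ω))
        = (μ.map (fun ω (k : Fin (m + r) ⊕ Fin r) => Sum.elim t d (e 0 k) ω)).map G :=
      (Measure.map_map hGmeas (hΦmeas 0)).symm
    have e₂ : μ.map (fun ω => G (fun k => Sum.elim t d (e i k) ω))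
        = (μ.map (fun ω (k : Fin (m + r) ⊕ Fin r) => Sum.elim t d (e i k) ω)).map G :=
      (Measure.map_map hGmeas (hΦmeas i)).symm
    rw [e₁, e₂, hjoint 0, hjoint i]
  constructor
  · rw [hE₁, hE₂]; exact hmapeq
  · intro hi
    rw [hE₁, hE₂]
    set S₁ : Finset (ℤ ⊕ ℕ) :=
      ((Finset.Icc (1 - (m : ℤ)) ((r : ℤ) - 1)).image Sum.inl) ∪
        ((Finset.range r).image Sum.inr) with hS₁def
    set S₂ : Finset (ℤ ⊕ ℕ) :=
      ((Finset.Icc ((i : ℤ) - (m : ℤ) + 1) ((i : ℤ) + (r : ℤ) - 1)).image Sum.inl) ∪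
        ((Finset.Ico i (i + r)).image Sum.inr) with hS₂def
    have hdisj : Disjoint S₁ S₂ := by
      rw [Finset.disjoint_left]
      intro k hk₁ hk₂
      rw [hS₁def] at hk₁; rw [hS₂def] at hk₂
      simp only [Finset.mem_union, Finset.mem_image, Finset.mem_Icc, Finset.mem_range,
        Finset.mem_Ico] at hk₁ hk₂
      rcases hk₁ with ⟨a, ha, rfl⟩ | ⟨j, hj, rfl⟩
      · rcases hk₂ with ⟨b, hb, hba⟩ | ⟨j', _, hj'⟩
        · rw [Sum.inl.injEq] at hba; omega
        · exact absurd hj' (by simp)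
      · rcases hk₂ with ⟨b, _, hb⟩ | ⟨j', hj', hjj⟩
        · exact absurd hb (by simp)
        · rw [Sum.inr.injEq] at hjj; omega
    have base := hindep.indepFun_finset S₁ S₂ hdisj hmeasSum
    set H₁ : (↥S₁ → ℝ) → Fin m → ℝ := fun v i' =>
      ∑ j : Fin r,
        (if h : Sum.inl ((j : ℤ) - (i' : ℤ)) ∈ S₁ then v ⟨_, h⟩ else 0) *
        (if h : (Sum.inr (j : ℕ) : ℤ ⊕ ℕ) ∈ S₁ then v ⟨_, h⟩ else 0) * x j with hH₁def
    set H₂ : (↥S₂ → ℝ) → Fin m → ℝ := fun v i' =>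
      ∑ j : Fin r,
        (if h : Sum.inl ((j : ℤ) + (i : ℤ) - (i' : ℤ)) ∈ S₂ then v ⟨_, h⟩ else 0) *
        (if h : (Sum.inr ((j : ℕ) + i) : ℤ ⊕ ℕ) ∈ S₂ then v ⟨_, h⟩ else 0) * x j with hH₂def
    have hH₁meas : Measurable H₁ := measurable_pi_lambda _ fun i' =>
      Finset.measurable_sum _ fun j _ =>
        ((meas_eval_dite _).mul (meas_eval_dite _)).mul_const _
    have hH₂meas : Measurable H₂ := measurable_pi_lambda _ fun i' =>
      Finset.measurable_sum _ fun j _ =>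
        ((meas_eval_dite _).mul (meas_eval_dite _)).mul_const _
    have hmem₁t : ∀ (i' : Fin m) (j : Fin r), Sum.inl ((j : ℤ) - (i' : ℤ)) ∈ S₁ := by
      intro i' j
      exact Finset.mem_union_left _ (Finset.mem_image_of_mem _ (Finset.mem_Icc.mpr
        ⟨by have := i'.2; omega, by have := j.2; omega⟩))
    have hmem₁d : ∀ (j : Fin r), (Sum.inr (j : ℕ) : ℤ ⊕ ℕ) ∈ S₁ := by
      intro j
      exact Finset.mem_union_right _ (Finset.mem_image_of_mem _ (Finset.mem_range.mpr j.2))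
    have hmem₂t : ∀ (i' : Fin m) (j : Fin r),
        Sum.inl ((j : ℤ) + (i : ℤ) - (i' : ℤ)) ∈ S₂ := by
      intro i' j
      exact Finset.mem_union_left _ (Finset.mem_image_of_mem _ (Finset.mem_Icc.mpr
        ⟨by have := i'.2; omega, by have := j.2; omega⟩))
    have hmem₂d : ∀ (j : Fin r), (Sum.inr ((j : ℕ) + i) : ℤ ⊕ ℕ) ∈ S₂ := by
      intro j
      exact Finset.mem_union_right _ (Finset.mem_image_of_mem _ (Finset.mem_Ico.mpr
        ⟨by omega, by have := j.2; omega⟩))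
    have hR₁ : F₁ = fun ω => H₁ (fun k : ↥S₁ => Sum.elim t d (k : ℤ ⊕ ℕ) ω) := by
      rw [hF₁def, hH₁def]
      funext ω i'
      refine Finset.sum_congr rfl fun j _ => ?_
      rw [dif_pos (hmem₁t i' j), dif_pos (hmem₁d j)]
      rfl
    have hR₂ : F₂ = fun ω => H₂ (fun k : ↥S₂ => Sum.elim t d (k : ℤ ⊕ ℕ) ω) := by
      rw [hF₂def, hH₂def]
      funext ω i'
      refine Finset.sum_congr rfl fun j _ => ?_
      rw [dif_pos (hmem₂t i' j), dif_pos (hmem₂d j)]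
      rfl
    have key := base.comp hH₁meas hH₂meas
    rw [hR₁, hR₂]
    exact key
end
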